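/- Let λ > 1, let Q and Q' be two probability distributions on a three-point space with Q' assigning probabilities (wp, w(1-p), 1-w) and Q assigning probabilities (w[p(1-q)+(1-p)q], w[(1-p)(1-q)+pq], 1-w) to the three points, where w ∈ (0,1], p ∈ (0,1/2), q ∈ (0,1). Then the Rényi divergence of order λ, D_λ(Q‖Q') = (1/(λ-1)) ln Σ_x Q(x)^λ Q'(x)^{1-λ}, satisfies D_λ(Q‖Q') ≤ (q·w/(λ-1)) · (((1-p)/p)^{λ-1} - 1). -/

import Mathlib

set_option maxHeartbeats 1000000


/-- Rényi divergence bound for the single-bit flipping mechanism on a three-point space.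
`Q'` assigns probabilities `(wp, w(1-p), 1-w)` and `Q` assigns
`(w[p(1-q)+(1-p)q], w[(1-p)(1-q)+pq], 1-w)`.  For `λ > 1`,
`D_λ(Q‖Q') = (1/(λ-1)) ln Σ_x Q(x)^λ Q'(x)^(1-λ) ≤ (qw/(λ-1))(((1-p)/p)^(λ-1) - 1)`. -/
theorem renyi_divergence_three_point_bound (w p q l : ℝ)
    (hw0 : 0 < w) (hw1 : w ≤ 1) (hp0 : 0 < p) (hp : p < 1 / 2)
    (hq0 : 0 < q) (hq1 : q < 1) (hl : 1 < l)
    (Q Q' : Fin 3 → ℝ)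
    (hQ' : Q' = ![w * p, w * (1 - p), 1 - w])
    (hQ : Q = ![w * (p * (1 - q) + (1 - p) * q),
                w * ((1 - p) * (1 - q) + p * q), 1 - w]) :
    (1 / (l - 1)) * Real.log (∑ x, Q x ^ l * Q' x ^ (1 - l))
      ≤ (q * w / (l - 1)) * (((1 - p) / p) ^ (l - 1) - 1) := by
  have hl0 : 0 < l - 1 := by linarith
  set r : ℝ := (1 - p) / p with hrdef
  have hp1 : p < 1 := by linarith
  have hpr : p * r = 1 - p := by rw [hrdef]; field_simp
  have hr1 : 1 ≤ r := by rw [hrdef, le_div_iff₀ hp0]; linarith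
  have hr0 : 0 < r := by linarith
  set A : ℝ := 1 - q + q * r with hAdef
  set B : ℝ := 1 - q + q * (1 / r) with hBdef
  have hA0 : 0 < A := by
    have : 0 < q * r := by positivity
    rw [hAdef]; linarith
  have hB0 : 0 < B := by
    have : 0 < q * (1 / r) := by positivity
    rw [hBdef]; linarith
  have hAeq : p * A = p * (1 - q) + (1 - p) * q := by
    rw [hAdef]; nlinarith [hpr]
  have hBeq : (1 - p) * B = (1 - p) * (1 - q) + p * q := by
    have h1 : (1 - p) * (1 / r) = p := by
      rw [hrdef]; field_simp
      rw [div_self (by linarith : (1:ℝ) - p ≠ 0)]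
    rw [hBdef]; nlinarith [h1]
  have key : ∀ c a : ℝ, 0 < c → 0 ≤ a → (c * a) ^ l * c ^ (1 - l) = c * a ^ l := by
    intro c a hc ha
    rw [Real.mul_rpow hc.le ha, mul_assoc, mul_comm (a ^ l), ← mul_assoc,
      ← Real.rpow_add hc]
    norm_num
  have hQ0 : Q 0 = (w * p) * A := by
    rw [hQ]; show w * (p * (1 - q) + (1 - p) * q) = w * p * A
    rw [mul_assoc, hAeq]
  have hQ1 : Q 1 = (w * (1 - p)) * B := by
    rw [hQ]; show w * ((1 - p) * (1 - q) + p * q) = w * (1 - p) * B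
    rw [mul_assoc, hBeq]
  have hsum : (∑ x, Q x ^ l * Q' x ^ (1 - l))
      = w * p * A ^ l + w * (1 - p) * B ^ l + (1 - w) ^ l * (1 - w) ^ (1 - l) := by
    rw [Fin.sum_univ_three, hQ0, hQ1, hQ']
    show (w * p * A) ^ l * (w * p) ^ (1 - l) + (w * (1 - p) * B) ^ l * (w * (1 - p)) ^ (1 - l)
        + Q 2 ^ l * (1 - w) ^ (1 - l) = _
    rw [hQ]
    show _ + _ + (1 - w) ^ l * (1 - w) ^ (1 - l) = _
    rw [key (w * p) A (by positivity) hA0.le, key (w * (1 - p)) B (by nlinarith) hB0.le]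
  have h3 : (1 - w) ^ l * (1 - w) ^ (1 - l) = 1 - w := by
    rcases eq_or_lt_of_le hw1 with h | h
    · simp [← h, Real.zero_rpow (by linarith : l ≠ 0)]
    · rw [← Real.rpow_add (by linarith)]; norm_num
  have conv := convexOn_rpow (le_of_lt hl)
  have hAle : A ^ l ≤ (1 - q) + q * r ^ l := by
    have := conv.2 (Set.mem_Ici.2 (zero_le_one)) (Set.mem_Ici.2 hr0.le)
      (by linarith : (0:ℝ) ≤ 1 - q) hq0.le (by ring)
    simpa [Real.one_rpow, smul_eq_mul, hAdef] using this
  have hBle : B ^ l ≤ (1 - q) + q * (1 / r) ^ l := by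
    have := conv.2 (Set.mem_Ici.2 (zero_le_one)) (Set.mem_Ici.2 (by positivity : (0:ℝ) ≤ 1/r))
      (by linarith : (0:ℝ) ≤ 1 - q) hq0.le (by ring)
    simpa [Real.one_rpow, smul_eq_mul, hBdef] using this
  have hrl : r ^ l = r ^ (l - 1) * r := by
    rw [← Real.rpow_add_one (ne_of_gt hr0)]; ring_nf
  have hrinv : (1 / r) ^ l = 1 / r ^ l := by
    rw [Real.div_rpow zero_le_one hr0.le, Real.one_rpow]
  have hrinv2 : r * (1 / r ^ l) = r ^ (1 - l) := by
    rw [Real.rpow_sub hr0, Real.rpow_one]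
    field_simp
  have hmono : r ^ (1 - l) ≤ r ^ (l - 1) :=
    Real.rpow_le_rpow_of_exponent_le hr1 (by linarith)
  have hmix : p * r ^ l + (1 - p) * (1 / r) ^ l ≤ r ^ (l - 1) := by
    rw [hrl, hrinv, ← hpr]
    have h2 : p * r * (1 / r ^ l) = p * r ^ (1 - l) := by
      rw [mul_assoc, hrinv2]
    rw [h2]
    have h4 : p * (r ^ (l - 1) * r) = (1 - p) * r ^ (l - 1) := by
      rw [← hpr]; ring
    rw [h4]
    nlinarith [mul_le_mul_of_nonneg_left hmono hp0.le]
  have hrpow1 : 1 ≤ r ^ (l - 1) := Real.one_le_rpow hr1 hl0.le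
  have hS : (∑ x, Q x ^ l * Q' x ^ (1 - l)) ≤ 1 + q * w * (r ^ (l - 1) - 1) := by
    rw [hsum, h3]
    have h5 := mul_le_mul_of_nonneg_left hAle hp0.le
    have h6 := mul_le_mul_of_nonneg_left hBle (by linarith : (0:ℝ) ≤ 1 - p)
    have h7 := mul_le_mul_of_nonneg_left hmix hq0.le
    have hcore : p * A ^ l + (1 - p) * B ^ l ≤ (1 - q) + q * r ^ (l - 1) := by
      nlinarith [h5, h6, h7]
    nlinarith [mul_le_mul_of_nonneg_left hcore hw0.le]
  have hSpos : 0 < ∑ x, Q x ^ l * Q' x ^ (1 - l) := by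
    rw [hsum, h3]
    have h8 : 0 < w * p * A ^ l := by
      have := Real.rpow_pos_of_pos hA0 l; positivity
    have h9 : 0 ≤ w * (1 - p) * B ^ l :=
      mul_nonneg (mul_nonneg hw0.le (by linarith)) (Real.rpow_pos_of_pos hB0 l).le
    nlinarith
  have hlog : Real.log (∑ x, Q x ^ l * Q' x ^ (1 - l)) ≤ q * w * (r ^ (l - 1) - 1) := by
    calc Real.log (∑ x, Q x ^ l * Q' x ^ (1 - l))
        ≤ (∑ x, Q x ^ l * Q' x ^ (1 - l)) - 1 := Real.log_le_sub_one_of_pos hSpos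
      _ ≤ q * w * (r ^ (l - 1) - 1) := by linarith
  calc (1 / (l - 1)) * Real.log (∑ x, Q x ^ l * Q' x ^ (1 - l))
      ≤ (1 / (l - 1)) * (q * w * (r ^ (l - 1) - 1)) :=
        mul_le_mul_of_nonneg_left hlog (by positivity)
    _ = (q * w / (l - 1)) * (r ^ (l - 1) - 1) := by ring
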